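/- Let W = L_1 ... L_k be the Lyndon factorization of W, and fix an index m with 1 ≤ m ≤ k. Then the global suffix of W starting at the beginning of L_m equals L_m L_{m+1} ... L_k, and for any position i strictly inside L_m, the global suffix starting at i is strictly greater than L_m L_{m+1} ... L_k. -/

import Mathlib

/-- A Lyndon word: nonempty and strictly lexicographically smaller than
every proper cyclic rotation. -/
def IsLyndon {α : Type*} [LinearOrder α] (l : List α) : Prop :=
  l ≠ [] ∧ ∀ u v : List α, u ≠ [] → v ≠ [] → l = u ++ v → l < v ++ u

private theorem lex_append_of_length_le {α : Type*} [LinearOrder α] :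
    ∀ {s t : List α}, List.Lex (· < ·) s t → t.length ≤ s.length →
      ∀ x y : List α, List.Lex (· < ·) (s ++ x) (t ++ y) := by
  intro s t h
  induction h with
  | nil => intro hl; simp at hl
  | @rel a l₁ b l₂ hab => intro _ x y; exact List.Lex.rel hab
  | @cons a l₁ l₂ h ih =>
      intro hl x y
      exact List.Lex.cons (ih (by simpa using hl) x y)

/-- Strip a not-prefix: from `Lex w (v ++ x)` with `v` not a prefix of `w`,
get `Lex w v`. -/
private theorem lex_of_lex_append {α : Type*} [LinearOrder α] :
    ∀ (v w x : List α), List.Lex (· < ·) w (v ++ x) → ¬ v <+: w →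
      List.Lex (· < ·) w v := by
  intro v
  induction v with
  | nil => intro w x _ hp; exact absurd (List.nil_prefix) hp
  | cons b v' ih =>
      intro w x h hp
      cases w with
      | nil => exact List.Lex.nil
      | cons a w' =>
          cases h with
          | rel hab => exact List.Lex.rel hab
          | cons h' =>
              refine List.Lex.cons (ih w' x h' ?_)
              intro hpre
              exact hp (List.cons_prefix_cons.mpr ⟨rfl, hpre⟩)

private theorem lex_cancel_left {α : Type*} [LinearOrder α] :
    ∀ (p s t : List α), List.Lex (· < ·) (p ++ s) (p ++ t) →
      List.Lex (· < ·) s t := by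
  intro p
  induction p with
  | nil => intro s t h; simpa using h
  | cons a p' ih =>
      intro s t h
      cases h with
      | rel hab => exact absurd hab (lt_irrefl a)
      | cons h' => exact ih s t h'

/-- A Lyndon word is strictly smaller than each of its proper nonempty
suffixes. -/
private theorem lyndon_lt_suffix {α : Type*} [LinearOrder α] {w u v : List α}
    (hL : IsLyndon w) (hu : u ≠ []) (hv : v ≠ []) (hw : w = u ++ v) :
    List.Lex (· < ·) w v := by
  have h1 : List.Lex (· < ·) w (v ++ u) := hL.2 u v hu hv hw
  by_cases hp : v <+: w
  · -- v is a prefix of w : derive a contradiction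
    exfalso
    obtain ⟨t, ht⟩ := hp
    have hlen : w.length = u.length + v.length := by simp [hw]
    have hu0 : 0 < u.length := List.length_pos_iff.mpr hu
    have htne : t ≠ [] := by
      intro h0
      subst h0
      simp at ht
      have hvw := congrArg List.length ht
      omega
    have h2 : List.Lex (· < ·) w (t ++ v) := hL.2 v t hv htne ht.symm
    have h3 : List.Lex (· < ·) t u := by
      apply lex_cancel_left v
      rw [ht]; exact h1
    have hlt : u.length ≤ t.length := by
      have : w.length = v.length + t.length := by simp [← ht]
      omega
    have h4 : List.Lex (· < ·) (t ++ v) (u ++ v) := lex_append_of_length_le h3 hlt v v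
    rw [← hw] at h4
    have : List.Lex (· < ·) w w := by
      have i1 : w < t ++ v := h2
      have i2 : (t ++ v : List α) < w := h4
      exact lt_trans i1 i2
    exact lt_irrefl w this
  · exact lex_of_lex_append v w u h1 hp

/-- In the Lyndon factorization `W = L_1 ⋯ L_k` (with `F = A ++ L :: B`,
`L = L_m`), the global suffix starting at the beginning of `L_m` is
`L_m L_{m+1} ⋯ L_k`, and the global suffix starting at any position
strictly inside `L_m` is strictly greater than `L_m L_{m+1} ⋯ L_k`. -/
theorem suffix_at_lyndon_factor {α : Type*} [LinearOrder α]
    (A B : List (List α)) (L : List α)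
    (hLy : ∀ l ∈ A ++ L :: B, IsLyndon l)
    (hchain : (A ++ L :: B).Chain' (· ≥ ·)) :
    (A ++ L :: B).flatten.drop A.flatten.length = L ++ B.flatten ∧
      ∀ i, A.flatten.length < i → i < A.flatten.length + L.length →
        L ++ B.flatten < (A ++ L :: B).flatten.drop i := by
  have hflat : (A ++ L :: B).flatten = A.flatten ++ (L ++ B.flatten) := by
    simp [List.flatten_append]
  constructor
  · rw [hflat, List.drop_left]
  · intro i hi1 hi2
    set j := i - A.flatten.length with hj
    have hji : i = A.flatten.length + j := by omega
    have hj0 : 0 < j := by omega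
    have hjL : j < L.length := by omega
    have hdrop : (A ++ L :: B).flatten.drop i = L.drop j ++ B.flatten := by
      rw [hflat, hji, List.drop_length_add_append, List.drop_append_of_le_length (le_of_lt hjL)]
    rw [hdrop]
    have hLyn : IsLyndon L := hLy L (by simp)
    have htake : L = L.take j ++ L.drop j := (List.take_append_drop j L).symm
    have htne : L.take j ≠ [] := by
      intro h
      have hl := congrArg List.length h
      rw [List.length_take, List.length_nil] at hl
      omega
    have hdne : L.drop j ≠ [] := by
      intro h
      have hl := congrArg List.length h
      rw [List.length_drop, List.length_nil] at hl
      omega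
    have hlex : List.Lex (· < ·) L (L.drop j) := lyndon_lt_suffix hLyn htne hdne htake
    have hlen : (L.drop j).length ≤ L.length := by simp
    exact lex_append_of_length_le hlex hlen B.flatten B.flatten
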